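/- Let Q(t₁,t₂) = (α(t₁,t₂), β(t₁,t₂)) be the chord angles of R restricted to [t₁,t₂]: α = arg(R'(t₁)/(R(t₂)−R(t₁))), β = arg(R'(t₂)/(R(t₂)−R(t₁))). Then for all t₁ < t₂, |α(t₁,t₂)| + |β(t₁,t₂)| ≤ 2(t₂ − t₁). Consequently, extending Q by Q(t,t) := (0,0), the map Q is continuous on {(t₁,t₂) : t₁ ≤ t₂}. -/

import Mathlib

open Real Complex Set

noncomputable def xi (t : ℝ) : ℝ :=
  ∫ τ in (0:ℝ)..t, Real.sin τ ^ 2 / Real.sqrt (1 + Real.sin τ ^ 2)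

noncomputable def R (t : ℝ) : ℂ := (Real.sin t : ℂ) + Complex.I * (xi t : ℂ)

noncomputable def alphaAng (t₁ t₂ : ℝ) : ℝ := Complex.arg (deriv R t₁ / (R t₂ - R t₁))
noncomputable def betaAng (t₁ t₂ : ℝ) : ℝ := Complex.arg (deriv R t₂ / (R t₂ - R t₁))

/-- The chord-angle map, extended by `(0,0)` on the diagonal. -/
noncomputable def Q (p : ℝ × ℝ) : ℝ × ℝ :=
  if p.1 < p.2 then (alphaAng p.1 p.2, betaAng p.1 p.2) else (0, 0)

noncomputable def uu (t : ℝ) : ℝ := Real.sin t ^ 2 / Real.sqrt (1 + Real.sin t ^ 2)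
noncomputable def th (t : ℝ) : ℝ := π/2 - 2 * Real.arcsin (Real.cos t / Real.sqrt 2)

lemma sqrt1s_pos (t : ℝ) : 0 < Real.sqrt (1 + Real.sin t ^ 2) :=
  Real.sqrt_pos.2 (by positivity)

lemma uu_nonneg (t : ℝ) : 0 ≤ uu t := by unfold uu; positivity

lemma uu_cont : Continuous uu := by
  apply Continuous.div (by continuity) (by continuity)
  exact fun x => ne_of_gt (sqrt1s_pos x)

lemma cos_sq_div_two (t : ℝ) : 1 - (Real.cos t / Real.sqrt 2) ^ 2 = (1 + Real.sin t ^ 2)/2 := by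
  have h2 : Real.sqrt 2 ^ 2 = 2 := Real.sq_sqrt (by norm_num)
  have := Real.sin_sq_add_cos_sq t
  field_simp [h2]
  nlinarith

lemma abs_cos_div_sqrt_two (t : ℝ) : |Real.cos t / Real.sqrt 2| ≤ Real.sqrt 2 / 2 := by
  have h2 : (0:ℝ) < Real.sqrt 2 := Real.sqrt_pos.2 (by norm_num)
  have h2' : Real.sqrt 2 ^ 2 = 2 := Real.sq_sqrt (by norm_num)
  rw [abs_div, abs_of_pos h2, div_le_div_iff₀ h2 (by norm_num)]
  nlinarith [abs_cos_le_one t]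

lemma cos_th (t : ℝ) : Real.cos (th t) = Real.cos t * Real.sqrt (1 + Real.sin t ^ 2) := by
  have hb := abs_cos_div_sqrt_two t
  have h2 : (0:ℝ) < Real.sqrt 2 := Real.sqrt_pos.2 (by norm_num)
  have h2' : Real.sqrt 2 ^ 2 = 2 := Real.sq_sqrt (by norm_num)
  have hle : Real.sqrt 2 / 2 ≤ 1 := by nlinarith
  have h1 : -1 ≤ Real.cos t / Real.sqrt 2 := by
    have := abs_le.1 hb; linarith [this.1]
  have h1' : Real.cos t / Real.sqrt 2 ≤ 1 := by
    have := abs_le.1 hb; linarith [this.2]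
  unfold th
  rw [Real.cos_pi_div_two_sub, Real.sin_two_mul, Real.sin_arcsin h1 h1', Real.cos_arcsin,
    cos_sq_div_two, Real.sqrt_div (by positivity) 2]
  rw [show 2 * (Real.cos t / Real.sqrt 2) * (Real.sqrt (1 + Real.sin t ^ 2) / Real.sqrt 2)
      = Real.cos t * Real.sqrt (1 + Real.sin t ^ 2) * (2 / Real.sqrt 2 ^ 2) by ring, h2']
  ring

lemma sin_th (t : ℝ) : Real.sin (th t) = Real.sin t ^ 2 := by
  have h2' : Real.sqrt 2 ^ 2 = 2 := Real.sq_sqrt (by norm_num)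
  have hb := abs_cos_div_sqrt_two t
  have h2 : (0:ℝ) < Real.sqrt 2 := Real.sqrt_pos.2 (by norm_num)
  have hle : Real.sqrt 2 / 2 ≤ 1 := by nlinarith
  have h1 : -1 ≤ Real.cos t / Real.sqrt 2 := by have := abs_le.1 hb; linarith [this.1]
  have h1' : Real.cos t / Real.sqrt 2 ≤ 1 := by have := abs_le.1 hb; linarith [this.2]
  unfold th
  rw [Real.sin_pi_div_two_sub, Real.cos_two_mul, Real.cos_arcsin,
    Real.sq_sqrt (by nlinarith [sq_nonneg (Real.cos t / Real.sqrt 2)] : (0:ℝ) ≤ 1 - (Real.cos t / Real.sqrt 2)^2)]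
  have hc : (Real.cos t / Real.sqrt 2) ^ 2 = Real.cos t ^ 2 / 2 := by
    rw [div_pow, h2']
  rw [hc]
  nlinarith [Real.sin_sq_add_cos_sq t]

lemma th_mem (t : ℝ) : th t ∈ Icc 0 π := by
  have hb := abs_le.1 (abs_cos_div_sqrt_two t)
  have h4 : Real.arcsin (Real.sqrt 2 / 2) = π/4 := by
    rw [show Real.sqrt 2 / 2 = Real.sin (π/4) from (Real.sin_pi_div_four).symm,
      Real.arcsin_sin (by linarith [Real.pi_pos]) (by linarith [Real.pi_pos])]
  have hub : Real.arcsin (Real.cos t / Real.sqrt 2) ≤ π/4 := h4 ▸ Real.monotone_arcsin hb.2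
  have hlb : -(π/4) ≤ Real.arcsin (Real.cos t / Real.sqrt 2) := by
    have := Real.monotone_arcsin hb.1
    rwa [Real.arcsin_neg, h4] at this
  constructor <;> [skip; skip] <;> unfold th <;> linarith

lemma hasDerivAt_th (t : ℝ) :
    HasDerivAt th (2 * Real.sin t / Real.sqrt (1 + Real.sin t ^ 2)) t := by
  have hb := abs_le.1 (abs_cos_div_sqrt_two t)
  have h2 : (0:ℝ) < Real.sqrt 2 := Real.sqrt_pos.2 (by norm_num)
  have hlt : Real.sqrt 2 / 2 < 1 := by
    nlinarith [Real.sq_sqrt (show (0:ℝ) ≤ 2 by norm_num)]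
  have hne1 : Real.cos t / Real.sqrt 2 ≠ 1 := by intro h; rw [h] at hb; linarith [hb.2]
  have hne1' : Real.cos t / Real.sqrt 2 ≠ -1 := by intro h; rw [h] at hb; linarith [hb.1]
  have hinner : HasDerivAt (fun t => Real.cos t / Real.sqrt 2) (-Real.sin t / Real.sqrt 2) t :=
    (Real.hasDerivAt_cos t).div_const _
  have harcsin := (Real.hasDerivAt_arcsin hne1' hne1).comp t hinner
  have h := (harcsin.const_mul 2).const_sub (π/2)
  refine h.congr_deriv ?_
  rw [cos_sq_div_two, Real.sqrt_div (by positivity) 2]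
  have hs := sqrt1s_pos t
  field_simp

lemma th_lipschitz (s t : ℝ) : |th t - th s| ≤ 2 * |t - s| := by
  have := Convex.norm_image_sub_le_of_norm_hasDerivWithin_le
    (f := th) (f' := fun x => 2 * Real.sin x / Real.sqrt (1 + Real.sin x ^ 2)) (C := 2)
    (s := Set.univ) (fun x _ => (hasDerivAt_th x).hasDerivWithinAt) ?_ convex_univ
    (Set.mem_univ s) (Set.mem_univ t)
  · simpa [Real.norm_eq_abs] using this
  · intro x _
    have hs := sqrt1s_pos x
    rw [Real.norm_eq_abs, abs_div, abs_of_pos hs, div_le_iff₀ hs]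
    have h1 : |Real.sin x| ≤ Real.sqrt (1 + Real.sin x ^ 2) := by
      rw [← Real.sqrt_sq_eq_abs]
      exact Real.sqrt_le_sqrt (by nlinarith)
    calc |2 * Real.sin x| = 2 * |Real.sin x| := by rw [abs_mul]; norm_num
    _ ≤ 2 * Real.sqrt (1 + Real.sin x ^ 2) := by linarith

lemma hasDerivAt_xi (t : ℝ) : HasDerivAt xi (uu t) t := by
  have : HasDerivAt (fun t => ∫ τ in (0:ℝ)..t, uu τ) (uu t) t :=
    intervalIntegral.integral_hasDerivAt_right (uu_cont.intervalIntegrable 0 t)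
      (uu_cont.stronglyMeasurableAtFilter _ _) uu_cont.continuousAt
  exact this

lemma hasDerivAt_R (t : ℝ) :
    HasDerivAt R ((Real.cos t : ℂ) + (uu t : ℂ) * Complex.I) t := by
  have h1 : HasDerivAt (fun t : ℝ => ((Real.sin t : ℝ) : ℂ)) (Real.cos t) t :=
    (Real.hasDerivAt_sin t).ofReal_comp
  have h2 : HasDerivAt (fun t : ℝ => ((xi t : ℝ) : ℂ)) (uu t) t :=
    (hasDerivAt_xi t).ofReal_comp
  have := h1.add (h2.const_mul Complex.I)
  refine this.congr_deriv ?_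
  ring

lemma deriv_R (t : ℝ) : deriv R t = (Real.cos t : ℂ) + (uu t : ℂ) * Complex.I :=
  (hasDerivAt_R t).deriv

lemma derivR_ne (t : ℝ) : deriv R t ≠ 0 := by
  rw [deriv_R]
  intro h
  have him : uu t = 0 := by simpa using congrArg Complex.im h
  have hre : Real.cos t = 0 := by simpa [-Complex.ofReal_cos] using congrArg Complex.re h
  have hsin : Real.sin t = 0 := by
    have hs := (sqrt1s_pos t).ne'
    unfold uu at him
    field_simp at him
    simpa using him
  nlinarith [Real.sin_sq_add_cos_sq t]

lemma arg_derivR (t : ℝ) : Complex.arg (deriv R t) = th t := by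
  have key : deriv R t =
      ((Real.sqrt (1 + Real.sin t ^ 2))⁻¹ : ℝ) *
        (Complex.cos (th t) + Complex.sin (th t) * Complex.I) := by
    rw [deriv_R]
    rw [show Complex.cos (th t) = ((Real.cos (th t) : ℝ) : ℂ) by
      rw [Complex.ofReal_cos]
    ]
    rw [show Complex.sin (th t) = ((Real.sin (th t) : ℝ) : ℂ) by
      rw [Complex.ofReal_sin]]
    rw [cos_th, sin_th]
    have hs := sqrt1s_pos t
    rw [Complex.ext_iff]
    constructor <;> simp [uu] <;> field_simp
  rw [key, Complex.arg_real_mul _ (by positivity : (0:ℝ) < (Real.sqrt (1 + Real.sin t ^ 2))⁻¹)]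
  push_cast
  exact Complex.arg_cos_add_sin_mul_I
    ⟨lt_of_lt_of_le (by linarith [Real.pi_pos]) (th_mem t).1, (th_mem t).2⟩

lemma xi_lt (t₁ t₂ : ℝ) (h : t₁ < t₂) : xi t₁ < xi t₂ := by
  have hint : ∀ a b : ℝ, IntervalIntegrable uu MeasureTheory.volume a b :=
    fun a b => uu_cont.intervalIntegrable a b
  have hsplit : xi t₂ - xi t₁ = ∫ τ in t₁..t₂, uu τ := by
    have := intervalIntegral.integral_add_adjacent_intervals (hint 0 t₁) (hint t₁ t₂)
    unfold xi uu at *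
    rw [← this]; ring
  have hpos : 0 < ∫ τ in t₁..t₂, uu τ := by
    rw [intervalIntegral.integral_pos_iff_support_of_nonneg_ae
      (Filter.Eventually.of_forall uu_nonneg) (hint t₁ t₂)]
    refine ⟨h, ?_⟩
    have hZ : MeasureTheory.volume {τ : ℝ | Real.sin τ = 0} = 0 := by
      refine MeasureTheory.measure_mono_null
        (fun τ hτ => ?_) ((Set.countable_range (fun n : ℤ => (n : ℝ) * π)).measure_zero _)
      rcases Real.sin_eq_zero_iff.1 hτ with ⟨n, hn⟩
      exact ⟨n, hn⟩
    have hsub : Ioc t₁ t₂ \ {τ : ℝ | Real.sin τ = 0} ⊆ Function.support uu ∩ Ioc t₁ t₂ := by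
      rintro τ ⟨hτI, hτZ⟩
      refine ⟨?_, hτI⟩
      have hsin : Real.sin τ ≠ 0 := hτZ
      have : 0 < uu τ := by
        unfold uu
        have := sqrt1s_pos τ
        positivity
      exact this.ne'
    calc (0 : ENNReal) < MeasureTheory.volume (Ioc t₁ t₂ \ {τ : ℝ | Real.sin τ = 0}) := by
          rw [MeasureTheory.measure_diff_null hZ]
          simp [h, ENNReal.ofReal_pos]
      _ ≤ _ := MeasureTheory.measure_mono hsub
  linarith

lemma chord_im (t₁ t₂ : ℝ) : (R t₂ - R t₁).im = xi t₂ - xi t₁ := by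
  simp [R]

lemma arg_div_polar {z w : ℂ} (hz : z ≠ 0) (hw : w ≠ 0)
    (h : Complex.arg z - Complex.arg w ∈ Ioc (-π) π) :
    Complex.arg (z / w) = Complex.arg z - Complex.arg w := by
  have key : z / w = ((‖z‖ / ‖w‖ : ℝ) : ℂ) *
      (Complex.cos ((Complex.arg z - Complex.arg w : ℝ)) +
        Complex.sin ((Complex.arg z - Complex.arg w : ℝ)) * Complex.I) := by
    conv_lhs => rw [← Complex.norm_mul_exp_arg_mul_I z, ← Complex.norm_mul_exp_arg_mul_I w]
    rw [← Complex.exp_mul_I]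
    push_cast
    rw [sub_mul, Complex.exp_sub]
    have haw : (‖w‖ : ℂ) ≠ 0 := by
      simpa using (norm_ne_zero_iff.mpr hw)
    field_simp [Complex.exp_ne_zero]
  rw [key, Complex.arg_real_mul _ (div_pos (norm_pos_iff.mpr hz) (norm_pos_iff.mpr hw)),
    Complex.arg_cos_add_sin_mul_I h]

lemma chord_im_pos {t₁ t₂ : ℝ} (h : t₁ < t₂) : 0 < (R t₂ - R t₁).im := by
  rw [chord_im]; linarith [xi_lt t₁ t₂ h]

lemma chord_ne {t₁ t₂ : ℝ} (h : t₁ < t₂) : R t₂ - R t₁ ≠ 0 := by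
  intro h0
  have := chord_im_pos h
  rw [h0] at this
  simp at this

lemma arg_chord_mem {t₁ t₂ : ℝ} (h : t₁ < t₂) :
    Complex.arg (R t₂ - R t₁) ∈ Ioo 0 π := by
  have him := chord_im_pos h
  constructor
  · rcases lt_or_eq_of_le (Complex.arg_nonneg_iff.2 him.le) with h' | h'
    · exact h'
    · exfalso
      have := Complex.arg_eq_zero_iff.1 h'.symm
      linarith [this.2]
  · rcases lt_or_eq_of_le (Complex.arg_le_pi (R t₂ - R t₁)) with h' | h'
    · exact h'
    · exfalso
      have := Complex.arg_eq_pi_iff.1 h'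
      linarith [this.2]

lemma alpha_eq {t₁ t₂ : ℝ} (h : t₁ < t₂) :
    alphaAng t₁ t₂ = th t₁ - Complex.arg (R t₂ - R t₁) := by
  have hm := arg_chord_mem h
  have ht := th_mem t₁
  rw [alphaAng, arg_div_polar (derivR_ne t₁) (chord_ne h), arg_derivR]
  rw [arg_derivR]
  constructor
  · linarith [hm.2, ht.1]
  · linarith [hm.1, ht.2]

lemma beta_eq {t₁ t₂ : ℝ} (h : t₁ < t₂) :
    betaAng t₁ t₂ = th t₂ - Complex.arg (R t₂ - R t₁) := by
  have hm := arg_chord_mem h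
  have ht := th_mem t₂
  rw [betaAng, arg_div_polar (derivR_ne t₂) (chord_ne h), arg_derivR]
  rw [arg_derivR]
  constructor
  · linarith [hm.2, ht.1]
  · linarith [hm.1, ht.2]

lemma exists_tangent {t₁ t₂ : ℝ} (h : t₁ < t₂) :
    ∃ τ ∈ Ioo t₁ t₂, th τ = Complex.arg (R t₂ - R t₁) := by
  set C := R t₂ - R t₁ with hCdef
  have hC : C ≠ 0 := chord_ne h
  have hg : ∀ t : ℝ, HasDerivAt (fun t => ((R t - R t₁) / C).im)
      ((deriv R t / C).im) t := by
    intro t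
    have h1 : HasDerivAt (fun t => (R t - R t₁) / C) (deriv R t / C) t := by
      have := ((hasDerivAt_R t).sub_const (R t₁)).div_const C
      rw [deriv_R]
      exact this
    exact Complex.imCLM.hasFDerivAt.comp_hasDerivAt t h1
  have heq : (fun t => ((R t - R t₁) / C).im) t₁ = (fun t => ((R t - R t₁) / C).im) t₂ := by
    simp only
    rw [sub_self, zero_div, ← hCdef, div_self hC]
    simp
  obtain ⟨τ, hτ, him⟩ := exists_hasDerivAt_eq_zero h
    (fun x _ => (hg x).continuousAt.continuousWithinAt) heq (fun x _ => hg x)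
  refine ⟨τ, hτ, ?_⟩
  set k := (deriv R τ / C).re with hkdef
  have hk : deriv R τ / C = (k : ℂ) := Complex.ext rfl (by simpa using him)
  have hmul : deriv R τ = (k : ℂ) * C := by
    rw [← hk, div_mul_cancel₀ _ hC]
  have hkim : uu τ = k * C.im := by
    have := congrArg Complex.im hmul
    rw [deriv_R] at this
    simpa using this
  have hk0 : k ≠ 0 := by
    intro h0
    apply derivR_ne τ
    rw [hmul, h0]
    simp
  have hkpos : 0 < k := by
    rcases lt_or_gt_of_ne hk0 with hneg | hpos
    · exfalso
      have hCim := chord_im_pos h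
      nlinarith [uu_nonneg τ]
    · exact hpos
  rw [← arg_derivR, hmul, Complex.arg_real_mul _ hkpos]

lemma main_bound {t₁ t₂ : ℝ} (h : t₁ < t₂) :
    |alphaAng t₁ t₂| + |betaAng t₁ t₂| ≤ 2 * (t₂ - t₁) := by
  obtain ⟨τ, hτ, hth⟩ := exists_tangent h
  rw [alpha_eq h, beta_eq h, ← hth]
  have h1 := th_lipschitz τ t₁
  have h2 := th_lipschitz τ t₂
  have e1 : |t₁ - τ| = τ - t₁ := by
    rw [abs_sub_comm, abs_of_pos (by linarith [hτ.1])]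
  have e2 : |t₂ - τ| = t₂ - τ := abs_of_pos (by linarith [hτ.2])
  rw [e1] at h1
  rw [e2] at h2
  linarith

lemma R_cont : Continuous R :=
  continuous_iff_continuousAt.2 fun t => (hasDerivAt_R t).continuousAt

lemma derivR_cont : Continuous (deriv R) := by
  have : deriv R = fun t => (Real.cos t : ℂ) + (uu t : ℂ) * Complex.I := funext deriv_R
  rw [this]
  exact ((Complex.continuous_ofReal.comp Real.continuous_cos).add
    ((Complex.continuous_ofReal.comp uu_cont).mul continuous_const))

lemma quot_slit {t₁ t₂ : ℝ} (h : t₁ < t₂) :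
    deriv R t₁ / (R t₂ - R t₁) ∈ Complex.slitPlane := by
  set z := deriv R t₁ / (R t₂ - R t₁) with hz
  have hz0 : z ≠ 0 := div_ne_zero (derivR_ne _) (chord_ne h)
  have hargne : Complex.arg z ≠ π := by
    have : Complex.arg z = th t₁ - Complex.arg (R t₂ - R t₁) := alpha_eq h
    have hm := arg_chord_mem h
    have ht := th_mem t₁
    rw [this]
    intro hcontra
    have := hm.1
    have := ht.2
    linarith [hcontra ▸ (by linarith [hm.1, ht.2] : th t₁ - Complex.arg (R t₂ - R t₁) < π)]
  rw [Complex.mem_slitPlane_iff]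
  by_contra hcon
  push_neg at hcon
  obtain ⟨hre, him⟩ := hcon
  rcases lt_or_eq_of_le hre with hlt' | heq'
  · exact hargne (Complex.arg_eq_pi_iff.2 ⟨hlt', him⟩)
  · exact hz0 (Complex.ext (by simpa using heq') (by simpa using him))

theorem chord_angle_bound_and_continuity :
    (∀ t₁ t₂ : ℝ, t₁ < t₂ →
      |alphaAng t₁ t₂| + |betaAng t₁ t₂| ≤ 2 * (t₂ - t₁)) ∧
    ContinuousOn Q {p : ℝ × ℝ | p.1 ≤ p.2} := by
  refine ⟨fun t₁ t₂ h => main_bound h, ?_⟩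
  intro p hp
  have hp' : p.1 ≤ p.2 := hp
  rcases eq_or_lt_of_le hp' with heq | hlt
  · -- diagonal
    have hQp : Q p = 0 := by
      simp only [Q]
      rw [if_neg (by rw [heq]; exact lt_irrefl _)]
      rfl
    unfold ContinuousWithinAt
    rw [hQp]
    have hev : ∀ᶠ q : ℝ × ℝ in nhdsWithin p {p : ℝ × ℝ | p.1 ≤ p.2},
        ‖Q q‖ ≤ 2 * (q.2 - q.1) := by
      filter_upwards [self_mem_nhdsWithin] with q hq
      have hq3 : q.1 ≤ q.2 := hq
      by_cases h2 : q.1 < q.2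
      · simp only [Q]
        rw [if_pos h2, Prod.norm_def]
        have hb := main_bound h2
        refine max_le ?_ ?_ <;> rw [Real.norm_eq_abs] <;>
          [linarith [abs_nonneg (betaAng q.1 q.2)]; linarith [abs_nonneg (alphaAng q.1 q.2)]]
      · simp only [Q]
        rw [if_neg h2, Prod.norm_def]
        simp
        linarith
    have hc : Filter.Tendsto (fun q : ℝ × ℝ => 2 * (q.2 - q.1)) (nhds p) (nhds (2 * (p.2 - p.1))) :=
      (continuous_const.mul (continuous_snd.sub continuous_fst)).tendsto p
    rw [← heq, sub_self, mul_zero] at hc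
    exact squeeze_zero_norm' hev (tendsto_nhdsWithin_of_tendsto_nhds hc)
  · -- off-diagonal
    apply ContinuousAt.continuousWithinAt
    have hopen : IsOpen {q : ℝ × ℝ | q.1 < q.2} := isOpen_lt continuous_fst continuous_snd
    have hF : ContinuousAt (fun q : ℝ × ℝ => (alphaAng q.1 q.2, betaAng q.1 q.2)) p := by
      have hGa : ContinuousAt (fun q : ℝ × ℝ => deriv R q.1 / (R q.2 - R q.1)) p := by
        apply ContinuousAt.div
        · exact (derivR_cont.comp continuous_fst).continuousAt
        · exact ((R_cont.comp continuous_snd).sub (R_cont.comp continuous_fst)).continuousAt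
        · exact chord_ne hlt
      have hGb : ContinuousAt (fun q : ℝ × ℝ => deriv R q.2 / (R q.2 - R q.1)) p := by
        apply ContinuousAt.div
        · exact (derivR_cont.comp continuous_snd).continuousAt
        · exact ((R_cont.comp continuous_snd).sub (R_cont.comp continuous_fst)).continuousAt
        · exact chord_ne hlt
      refine ContinuousAt.prodMk ?_ ?_
      · show ContinuousAt (fun q : ℝ × ℝ => Complex.arg (deriv R q.1 / (R q.2 - R q.1))) p
        exact ContinuousAt.comp (x := p) (Complex.continuousAt_arg (quot_slit hlt)) hGa
      · show ContinuousAt (fun q : ℝ × ℝ => Complex.arg (deriv R q.2 / (R q.2 - R q.1))) p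
        refine ContinuousAt.comp (x := p) (Complex.continuousAt_arg ?_) hGb
        -- beta slit
        set z := deriv R p.2 / (R p.2 - R p.1) with hz
        have hz0 : z ≠ 0 := div_ne_zero (derivR_ne _) (chord_ne hlt)
        have hargne : Complex.arg z ≠ π := by
          have hval : Complex.arg z = th p.2 - Complex.arg (R p.2 - R p.1) := beta_eq hlt
          have hm := arg_chord_mem hlt
          have ht := th_mem p.2
          rw [hval]
          intro hcontra
          linarith [hm.1, ht.2]
        rw [Complex.mem_slitPlane_iff]
        by_contra hcon
        push_neg at hcon
        obtain ⟨hre, him⟩ := hcon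
        rcases lt_or_eq_of_le hre with hlt' | heq'
        · exact hargne (Complex.arg_eq_pi_iff.2 ⟨hlt', him⟩)
        · exact hz0 (Complex.ext (by simpa using heq') (by simpa using him))
    apply hF.congr
    filter_upwards [hopen.mem_nhds hlt] with q hq
    simp only [Q]
    rw [if_pos hq]
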